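/- arXiv:dg-ga/9607003 — 3 statements merged into one kernel-verified Lean document; each statement's English description precedes it below -/
import Mathlib

section
/- If P is a monic polynomial over the complex numbers with distinct roots β_1,...,β_s of multiplicities m_1,...,m_s, and v = P'/P is its logarithmic derivative, then v' + v^2 = Σ_i (m_i^2 - m_i)/(x - β_i)^2 + Σ_{i≠j} 2 m_i m_j / ((β_i - β_j)(x - β_i)), as rational functions. -/
open Polynomial

noncomputable def Amap : ℂ[X] →+* RatFunc ℂ := algebraMap ℂ[X] (RatFunc ℂ)

lemma Amap_ne_zero {p : ℂ[X]} (hp : p ≠ 0) : Amap p ≠ 0 := RatFunc.algebraMap_ne_zero hp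

lemma logd_mul (p q : ℂ[X]) (hp : p ≠ 0) (hq : q ≠ 0) :
    Amap (derivative (p * q)) / Amap (p * q)
    = Amap (derivative p) / Amap p + Amap (derivative q) / Amap q := by
  have hp' := Amap_ne_zero hp
  have hq' := Amap_ne_zero hq
  rw [derivative_mul, map_add, map_mul, map_mul, map_mul]
  field_simp

lemma logd_prod {ι : Type*} (t : Finset ι) (f : ι → ℂ[X]) (hf : ∀ i ∈ t, f i ≠ 0) :
    Amap (derivative (∏ i ∈ t, f i)) / Amap (∏ i ∈ t, f i)
    = ∑ i ∈ t, Amap (derivative (f i)) / Amap (f i) := by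
  classical
  induction t using Finset.cons_induction with
  | empty => simp
  | cons a t ha ih =>
    rw [Finset.prod_cons, Finset.sum_cons,
      logd_mul _ _ (hf a (Finset.mem_cons_self a t))
        (Finset.prod_ne_zero_iff.2 fun i hi => hf i (Finset.mem_cons_of_mem hi)),
      ih fun i hi => hf i (Finset.mem_cons_of_mem hi)]

lemma logd_pow (a : ℂ) (n : ℕ) :
    Amap (derivative ((X - C a) ^ n)) / Amap ((X - C a) ^ n)
    = (n : RatFunc ℂ) / Amap (X - C a) := by
  cases n with
  | zero => simp
  | succ k =>
    have h : Amap (X - C a) ≠ 0 := Amap_ne_zero (X_sub_C_ne_zero a)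
    rw [derivative_pow, derivative_X_sub_C, mul_one, map_mul, map_pow, Nat.succ_sub_one,
      pow_succ]
    have hC : Amap (C ((k+1 : ℕ) : ℂ)) = ((k+1 : ℕ) : RatFunc ℂ) := by push_cast; simp
    rw [hC, map_mul, map_pow]
    rw [mul_comm (((k+1 : ℕ) : RatFunc ℂ)) (Amap (X - C a) ^ k),
      mul_div_mul_left _ _ (pow_ne_zero k h)]

lemma derivative_finset_prod {ι : Type*} [DecidableEq ι] (t : Finset ι) (f : ι → ℂ[X]) :
    derivative (∏ i ∈ t, f i) = ∑ i ∈ t, (∏ j ∈ t.erase i, f j) * derivative (f i) := by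
  rw [Finset.prod_eq_multiset_prod, derivative_prod, Finset.sum_eq_multiset_sum]
  congr 1

lemma swap_erase_sum (s : ℕ) (G : Fin s → Fin s → RatFunc ℂ) :
    ∑ i, ∑ j ∈ Finset.univ.erase i, G i j = ∑ i, ∑ j ∈ Finset.univ.erase i, G j i := by
  simp_rw [Finset.sum_erase_eq_sub (Finset.mem_univ _)]
  rw [Finset.sum_sub_distrib, Finset.sum_sub_distrib, Finset.sum_comm]

theorem stmt_0 (s : ℕ) (β : Fin s → ℂ) (hβ : Function.Injective β)
    (m : Fin s → ℕ) (hm : ∀ i, 1 ≤ m i)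
    (P : Polynomial ℂ) (hP : P = ∏ i, (X - C (β i)) ^ m i)
    (hnc : 0 < P.degree)
    (v : RatFunc ℂ)
    (hv : v = algebraMap (Polynomial ℂ) (RatFunc ℂ) (derivative P) /
        algebraMap (Polynomial ℂ) (RatFunc ℂ) P) :
    (algebraMap (Polynomial ℂ) (RatFunc ℂ) (derivative (derivative P)) *
        algebraMap (Polynomial ℂ) (RatFunc ℂ) P -
      (algebraMap (Polynomial ℂ) (RatFunc ℂ) (derivative P)) ^ 2) /
        (algebraMap (Polynomial ℂ) (RatFunc ℂ) P) ^ 2 + v ^ 2 =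
    (∑ i, algebraMap ℂ (RatFunc ℂ) ((m i : ℂ) ^ 2 - (m i : ℂ)) /
        (RatFunc.X - algebraMap ℂ (RatFunc ℂ) (β i)) ^ 2) +
    ∑ i, ∑ j ∈ Finset.univ.filter (· ≠ i),
      algebraMap ℂ (RatFunc ℂ) (2 * (m i : ℂ) * (m j : ℂ) / (β i - β j)) /
        (RatFunc.X - algebraMap ℂ (RatFunc ℂ) (β i)) := by
  classical
  have hA : ∀ p : ℂ[X], algebraMap ℂ[X] (RatFunc ℂ) p = Amap p := fun p => rfl
  simp only [hA]
  simp only [hA] at hv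
  set c : ℂ →+* RatFunc ℂ := algebraMap ℂ (RatFunc ℂ) with hc
  set f : Fin s → ℂ[X] := fun i => (X - C (β i)) ^ m i with hf
  set L : Fin s → RatFunc ℂ := fun i => Amap (X - C (β i)) with hLdef
  have hXC : ∀ i, RatFunc.X - c (β i) = L i := by
    intro i
    rw [hLdef]
    simp [map_sub, RatFunc.algebraMap_X, RatFunc.algebraMap_C, hc, RatFunc.algebraMap_eq_C, Amap]
  have hL : ∀ i, L i ≠ 0 := fun i => Amap_ne_zero (X_sub_C_ne_zero (β i))
  have hf0 : ∀ i, f i ≠ 0 := fun i => pow_ne_zero _ (X_sub_C_ne_zero (β i))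
  have hP0 : P ≠ 0 := by rw [hP]; exact Finset.prod_ne_zero_iff.2 fun i _ => hf0 i
  have hAP : Amap P ≠ 0 := Amap_ne_zero hP0
  -- the g i
  set g : Fin s → ℂ[X] := fun i => (∏ j ∈ Finset.univ.erase i, f j) * derivative (f i) with hg
  have hdf : ∀ i, derivative (f i) = C ((m i : ℂ)) * (X - C (β i)) ^ (m i - 1) := by
    intro i
    rw [hf]
    simp [derivative_pow, derivative_X_sub_C]
  have hg0 : ∀ i, g i ≠ 0 := by
    intro i
    apply mul_ne_zero (Finset.prod_ne_zero_iff.2 fun j _ => hf0 j)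
    rw [hdf i]
    exact mul_ne_zero (by simpa using Nat.one_le_iff_ne_zero.1 (hm i))
      (pow_ne_zero _ (X_sub_C_ne_zero (β i)))
  have hP' : derivative P = ∑ i, g i := by
    rw [hP, derivative_finset_prod]
  -- g i / P = m i / L i
  have hCm : ∀ i, Amap (C ((m i : ℂ))) = ((m i : ℕ) : RatFunc ℂ) := by
    intro i
    rw [show (C ((m i : ℂ)) : ℂ[X]) = ((m i : ℕ) : ℂ[X]) by simp, map_natCast]
  have hgP : ∀ i, Amap (g i) / Amap P = (m i : RatFunc ℂ) / L i := by
    intro i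
    have key : g i * (X - C (β i)) = C ((m i : ℂ)) * P := by
      have hpow : (X - C (β i)) ^ (m i - 1) * (X - C (β i)) = f i := by
        rw [hf, ← pow_succ, Nat.sub_add_cancel (hm i)]
      calc g i * (X - C (β i))
          = (∏ j ∈ Finset.univ.erase i, f j) *
            (C ((m i : ℂ)) * ((X - C (β i)) ^ (m i - 1) * (X - C (β i)))) := by
            simp only [hg]; rw [hdf i]; ring
        _ = C ((m i : ℂ)) * (f i * ∏ j ∈ Finset.univ.erase i, f j) := by rw [hpow]; ring
        _ = C ((m i : ℂ)) * P := by
            rw [Finset.mul_prod_erase Finset.univ f (Finset.mem_univ i), hP]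
    rw [div_eq_div_iff hAP (hL i)]
    calc Amap (g i) * L i = Amap (g i * (X - C (β i))) := (map_mul Amap _ _).symm
      _ = Amap (C ((m i : ℂ)) * P) := by rw [key]
      _ = (m i : RatFunc ℂ) * Amap P := by rw [map_mul, hCm i]
  -- log derivative of g i
  have hlogg : ∀ i, Amap (derivative (g i)) / Amap (g i)
      = ((m i : RatFunc ℂ) - 1) / L i + ∑ j ∈ Finset.univ.erase i, (m j : RatFunc ℂ) / L j := by
    intro i
    have hprod0 : (∏ j ∈ Finset.univ.erase i, f j) ≠ 0 :=
      Finset.prod_ne_zero_iff.2 fun j _ => hf0 j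
    have hpow0 : ((X - C (β i)) ^ (m i - 1) : ℂ[X]) ≠ 0 := pow_ne_zero _ (X_sub_C_ne_zero _)
    have hCm0 : (C ((m i : ℂ)) : ℂ[X]) ≠ 0 := by
      simpa using Nat.one_le_iff_ne_zero.1 (hm i)
    have hgi : g i = C ((m i : ℂ)) *
        ((X - C (β i)) ^ (m i - 1) * ∏ j ∈ Finset.univ.erase i, f j) := by
      simp only [hg]; rw [hdf i]; ring
    rw [hgi, logd_mul _ _ hCm0 (mul_ne_zero hpow0 hprod0),
      logd_mul _ _ hpow0 hprod0, logd_pow, logd_prod _ _ (fun j _ => hf0 j)]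
    rw [show Amap (derivative (C ((m i : ℂ)))) = 0 by rw [derivative_C, map_zero], zero_div,
      zero_add]
    congr 1
    · rw [Nat.cast_sub (hm i), Nat.cast_one]
    · exact Finset.sum_congr rfl fun j _ => by rw [hf]; exact logd_pow (β j) (m j)
  -- second derivative over P
  have hP'' : Amap (derivative (derivative P)) / Amap P
      = ∑ i, (((m i : RatFunc ℂ) - 1) / L i + ∑ j ∈ Finset.univ.erase i, (m j : RatFunc ℂ) / L j)
          * ((m i : RatFunc ℂ) / L i) := by
    have hd2 : derivative (derivative P) = ∑ i, derivative (g i) := by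
      rw [hP', map_sum derivative g Finset.univ]
    rw [hd2, map_sum, Finset.sum_div]
    refine Finset.sum_congr rfl fun i _ => ?_
    rw [← hlogg i, ← hgP i, div_mul_div_comm, mul_comm (Amap (g i)) (Amap P),
      mul_div_mul_right _ _ (Amap_ne_zero (hg0 i))]
  -- reduce goal to P''/P
  have hgoal : (Amap (derivative (derivative P)) * Amap P - Amap (derivative P) ^ 2) /
      Amap P ^ 2 + v ^ 2 = Amap (derivative (derivative P)) / Amap P := by
    rw [hv]
    field_simp
    ring
  rw [hgoal, hP'']
  simp only [hXC, Finset.filter_ne']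
  have hsplit : ∀ i : Fin s,
      (((m i : RatFunc ℂ) - 1) / L i + ∑ j ∈ Finset.univ.erase i, (m j : RatFunc ℂ) / L j)
        * ((m i : RatFunc ℂ) / L i)
      = c ((m i : ℂ) ^ 2 - (m i : ℂ)) / L i ^ 2
        + ∑ j ∈ Finset.univ.erase i, ((m i : RatFunc ℂ) * (m j : RatFunc ℂ)) / (L i * L j) := by
    intro i
    rw [add_mul, Finset.sum_mul]
    congr 1
    · rw [div_mul_div_comm, ← sq]
      congr 1
      rw [map_sub, map_pow, map_natCast]
      ring
    · refine Finset.sum_congr rfl fun j _ => ?_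
      rw [div_mul_div_comm, mul_comm ((m j : RatFunc ℂ)) ((m i : RatFunc ℂ)),
        mul_comm (L j) (L i)]
  simp only [hsplit]
  rw [Finset.sum_add_distrib]
  congr 1
  have key : ∀ i : Fin s, ∀ j ∈ Finset.univ.erase i,
      ((m i : RatFunc ℂ) * (m j : RatFunc ℂ)) / (L i * L j)
      = c ((m i : ℂ) * (m j : ℂ) / (β i - β j)) / L i
        - c ((m i : ℂ) * (m j : ℂ) / (β i - β j)) / L j := by
    intro i j hj
    have hij : j ≠ i := Finset.ne_of_mem_erase hj
    have hd : (β i - β j) ≠ 0 := sub_ne_zero.2 fun h => hij (hβ h.symm)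
    have hLL : L j - L i = c (β i - β j) := by
      rw [← hXC i, ← hXC j, map_sub]; ring
    rw [div_sub_div _ _ (hL i) (hL j)]
    congr 1
    rw [show c ((m i:ℂ)*(m j:ℂ)/(β i - β j)) * L j - L i * c ((m i:ℂ)*(m j:ℂ)/(β i - β j))
        = c ((m i:ℂ)*(m j:ℂ)/(β i - β j)) * (L j - L i) by ring, hLL, ← map_mul,
      div_mul_cancel₀ _ hd, map_mul, map_natCast, map_natCast]
  calc ∑ i, ∑ j ∈ Finset.univ.erase i, ((m i : RatFunc ℂ) * (m j : RatFunc ℂ)) / (L i * L j)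
      = ∑ i, ∑ j ∈ Finset.univ.erase i,
          (c ((m i : ℂ) * (m j : ℂ) / (β i - β j)) / L i
            - c ((m i : ℂ) * (m j : ℂ) / (β i - β j)) / L j) :=
        Finset.sum_congr rfl fun i _ => Finset.sum_congr rfl fun j hj => key i j hj
    _ = (∑ i, ∑ j ∈ Finset.univ.erase i, c ((m i : ℂ) * (m j : ℂ) / (β i - β j)) / L i)
        - ∑ i, ∑ j ∈ Finset.univ.erase i, c ((m i : ℂ) * (m j : ℂ) / (β i - β j)) / L j := by
        rw [← Finset.sum_sub_distrib]
        exact Finset.sum_congr rfl fun i _ => Finset.sum_sub_distrib _ _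
    _ = (∑ i, ∑ j ∈ Finset.univ.erase i, c ((m i : ℂ) * (m j : ℂ) / (β i - β j)) / L i)
        - ∑ i, ∑ j ∈ Finset.univ.erase i, c ((m j : ℂ) * (m i : ℂ) / (β j - β i)) / L i := by
        rw [swap_erase_sum s (fun i j => c ((m i : ℂ) * (m j : ℂ) / (β i - β j)) / L j)]
    _ = ∑ i, ∑ j ∈ Finset.univ.erase i, c (2 * (m i : ℂ) * (m j : ℂ) / (β i - β j)) / L i := by
        rw [← Finset.sum_sub_distrib]
        refine Finset.sum_congr rfl fun i _ => ?_
        rw [← Finset.sum_sub_distrib]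
        refine Finset.sum_congr rfl fun j hj => ?_
        have h1 : ((m j : ℂ) * (m i : ℂ) / (β j - β i))
            = -((m i : ℂ) * (m j : ℂ) / (β i - β j)) := by
          rw [show (β j - β i) = -(β i - β j) by ring, div_neg]
          ring
        rw [h1, map_neg,
          show (2 * (m i : ℂ) * (m j : ℂ) / (β i - β j))
            = (m i:ℂ)*(m j:ℂ)/(β i - β j) + (m i:ℂ)*(m j:ℂ)/(β i - β j) by ring, map_add]
        ring
end

section
/- (Gauss–Lucas) Every root of the derivative P' of a nonconstant complex polynomial P lies in the convex hull of the set of roots of P. -/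
open Polynomial

private lemma msum_neg {s : Multiset ℝ} (h : ∀ x ∈ s, x < 0) (hs : s ≠ 0) : s.sum < 0 := by
  induction s using Multiset.induction with
  | empty => simp at hs
  | cons a t ih =>
    rw [Multiset.sum_cons]
    rcases eq_or_ne t 0 with rfl | ht
    · simpa using h a (Multiset.mem_cons_self a 0)
    · have := ih (fun x hx => h x (Multiset.mem_cons_of_mem hx)) ht
      linarith [h a (Multiset.mem_cons_self a t)]

theorem stmt_4 (P : Polynomial ℂ) (hP : 0 < P.degree) (z : ℂ)
    (hz : P.derivative.eval z = 0) :
    z ∈ convexHull ℝ {w : ℂ | P.eval w = 0} := by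
  classical
  have hP0 : P ≠ 0 := fun h => by simp [h] at hP
  by_cases hPz : P.eval z = 0
  · exact subset_convexHull ℝ _ hPz
  set s : Multiset ℂ := P.roots with hs
  have hcard : Multiset.card s = P.natDegree :=
    (Polynomial.splits_iff_card_roots).mp (IsAlgClosed.splits P)
  have hprod : C P.leadingCoeff * (s.map fun r => X - C r).prod = P :=
    C_leadingCoeff_mul_prod_multiset_X_sub_C hcard
  have ha : P.leadingCoeff ≠ 0 := leadingCoeff_ne_zero.mpr hP0
  have hsne : s ≠ 0 := by
    intro h0
    have h1 : P.natDegree = 0 := by rw [← hcard, h0]; simp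
    have h2 := natDegree_pos_iff_degree_pos.mpr hP
    omega
  have hzr : ∀ r ∈ s, z - r ≠ 0 := by
    intro r hr h0
    have : r = z := by linear_combination -h0
    subst this
    exact hPz ((mem_roots hP0).mp hr)
  have hQ : (s.map fun r => z - r).prod ≠ 0 := by
    intro h0
    rw [Multiset.prod_eq_zero_iff] at h0
    obtain ⟨r, hr, hr0⟩ := Multiset.mem_map.mp h0
    exact hzr r hr hr0
  have hderiv : P.derivative = C P.leadingCoeff * derivative (s.map fun r => X - C r).prod := by
    conv_lhs => rw [← hprod]
    rw [derivative_mul, derivative_C, zero_mul, zero_add]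
  have hsum0 : ((s.map fun r => ((s.erase r).map fun j => z - j).prod).sum) = 0 := by
    have hz' := hz
    rw [hderiv, eval_mul, eval_C, mul_eq_zero] at hz'
    rcases hz' with h | h
    · exact absurd h ha
    · rw [derivative_prod] at h
      set m : Multiset ℂ[X] := s.map fun i =>
        (Multiset.map (fun r => X - C r) (s.erase i)).prod * derivative (X - C i) with hm
      have h3 : (m.map (evalRingHom z)).sum = 0 :=
        (map_multiset_sum (evalRingHom z) m).symm.trans h
      rw [hm, Multiset.map_map] at h3
      rw [← h3]
      apply congrArg Multiset.sum
      apply Multiset.map_congr rfl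
      intro i hi
      simp [eval_multiset_prod, Multiset.map_map, Function.comp]
  have hkey : (s.map fun r => (z - r)⁻¹).sum = 0 := by
    have hfac : ∀ r ∈ s, ((s.erase r).map fun j => z - j).prod
        = (s.map fun r => z - r).prod * (z - r)⁻¹ := by
      intro r hr
      have hsplit : (s.map fun r => z - r).prod
          = (z - r) * ((s.erase r).map fun j => z - j).prod := by
        conv_lhs => rw [← Multiset.cons_erase hr]
        rw [Multiset.map_cons, Multiset.prod_cons]
      rw [hsplit, mul_comm (z - r), mul_assoc, mul_inv_cancel₀ (hzr r hr), mul_one]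
    have heq : (s.map fun r => ((s.erase r).map fun j => z - j).prod).sum
        = (s.map fun r => z - r).prod * (s.map fun r => (z - r)⁻¹).sum := by
      rw [Multiset.sum_map_mul_left.symm]
      exact congrArg Multiset.sum (Multiset.map_congr rfl hfac)
    rw [heq] at hsum0
    exact (mul_eq_zero.mp hsum0).resolve_left hQ
  -- separation argument
  by_contra hconv
  have hfin : Set.Finite {w : ℂ | P.eval w = 0} := P.finite_setOf_isRoot hP0
  obtain ⟨f, u, hfu, hub⟩ := geometric_hahn_banach_point_closed
    (convex_convexHull ℝ _) (hfin.isClosed_convexHull ℝ) hconv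
  set c : ℂ := Complex.ofReal (f 1) - Complex.ofReal (f Complex.I) * Complex.I with hc
  have hfc : ∀ w : ℂ, f w = (c * w).re := by
    intro w
    have hw : w = (w.re : ℝ) • (1 : ℂ) + (w.im : ℝ) • Complex.I := by
      simp [Complex.ext_iff]
    calc f w = f ((w.re : ℝ) • (1 : ℂ) + (w.im : ℝ) • Complex.I) := by rw [← hw]
    _ = w.re * f 1 + w.im * f Complex.I := by
        rw [map_add, f.map_smul, f.map_smul]; simp
    _ = (c * w).re := by simp [hc, Complex.mul_re]; ring
  have hneg : ∀ r ∈ s, ((starRingEnd ℂ) c * (z - r)⁻¹).re < 0 := by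
    intro r hr
    have hrroot : P.eval r = 0 := (mem_roots hP0).mp hr
    have h1 : u < f r := hub r (subset_convexHull ℝ _ hrroot)
    have h2 : f z < u := hfu
    have h3 : (c * (z - r)).re < 0 := by
      have e1 := hfc z; have e2 := hfc r
      have e3 : (c * (z - r)).re = (c * z).re - (c * r).re := by
        rw [mul_sub, Complex.sub_re]
      rw [e3]; linarith
    have hd := hzr r hr
    have hrew : (starRingEnd ℂ) c * (z - r)⁻¹
        = (starRingEnd ℂ) (c * (z - r)) * ((Complex.normSq (z - r))⁻¹ : ℝ) := by
      rw [Complex.inv_def, map_mul]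
      push_cast
      ring
    rw [hrew, Complex.mul_re]
    simp only [Complex.ofReal_re, Complex.ofReal_im, Complex.conj_re, Complex.conj_im, mul_zero]
    have hns : (0:ℝ) < Complex.normSq (z - r) := Complex.normSq_pos.mpr hd
    have hinv : (0:ℝ) < (Complex.normSq (z - r))⁻¹ := inv_pos.mpr hns
    nlinarith
  have hzero : (s.map fun r => ((starRingEnd ℂ) c * (z - r)⁻¹).re).sum = 0 := by
    have h1 : ((s.map fun r => (starRingEnd ℂ) c * (z - r)⁻¹).sum).re = 0 := by
      rw [Multiset.sum_map_mul_left, hkey, mul_zero, Complex.zero_re]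
    rw [← h1, ← Complex.coe_reAddGroupHom, map_multiset_sum, Multiset.map_map]
    rfl
  have hlt : (s.map fun r => ((starRingEnd ℂ) c * (z - r)⁻¹).re).sum < 0 := by
    apply msum_neg
    · intro x hx
      obtain ⟨r, hr, rfl⟩ := Multiset.mem_map.mp hx
      exact hneg r hr
    · simpa using hsne
  linarith
end

section
/- Let P ∈ ℂ[x] be monic nonconstant with v = P'/P, and suppose v satisfies v' + v^2 = [(1+b)/(1-x) - (1+a)/(1+x)]·v - λ/(1-x^2) as rational functions (the unperturbed Riccati equation), with a, b > -1 real and λ ∈ ℂ. Then P has no root at 1 or -1, and all roots of P are simple. -/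
open Polynomial

lemma keyfact (β : ℂ) (k : ℕ) (Q P : Polynomial ℂ)
    (hQ : P = (X - C β)^(k+2) * Q) :
    ∃ S R : Polynomial ℂ, S.eval β = ((k:ℂ)+2) * Q.eval β ∧
      R.eval β = ((k:ℂ)+1) * S.eval β ∧
      derivative P = (X - C β)^(k+1) * S ∧
      derivative (derivative P) = (X - C β)^k * R := by
  refine ⟨(C (k:ℂ) + 2) * Q + (X - C β) * derivative Q,
    (C (k:ℂ) + 1) * ((C (k:ℂ) + 2) * Q + (X - C β) * derivative Q)
      + (X - C β) * derivative ((C (k:ℂ) + 2) * Q + (X - C β) * derivative Q),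
    ?_, ?_, ?_, ?_⟩
  · simp [eval_add, eval_mul]
  · simp [eval_add, eval_mul]
  · rw [hQ]
    simp only [derivative_mul, derivative_pow, derivative_X_sub_C, derivative_add,
      derivative_C, derivative_X, derivative_one, derivative_ofNat]
    push_cast [C_add, C_1, map_ofNat]
    ring
  · rw [hQ]
    simp only [derivative_mul, derivative_pow, derivative_X_sub_C, derivative_add,
      derivative_C, derivative_X, derivative_one, derivative_ofNat]
    push_cast [C_add, C_1, map_ofNat]
    ring

theorem stmt_18 (a b : ℝ) (ha : a > -1) (hb : b > -1) (lam : ℂ)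
    (P : Polynomial ℂ) (hPmonic : P.Monic) (hP : 0 < P.degree)
    (v : RatFunc ℂ)
    (hv : v = algebraMap (Polynomial ℂ) (RatFunc ℂ) (derivative P) /
        algebraMap (Polynomial ℂ) (RatFunc ℂ) P)
    (hric : (algebraMap (Polynomial ℂ) (RatFunc ℂ) (derivative (derivative P)) *
          algebraMap (Polynomial ℂ) (RatFunc ℂ) P -
        (algebraMap (Polynomial ℂ) (RatFunc ℂ) (derivative P)) ^ 2) /
          (algebraMap (Polynomial ℂ) (RatFunc ℂ) P) ^ 2 + v ^ 2 =
      (algebraMap ℂ (RatFunc ℂ) (1 + (b : ℂ)) / (1 - RatFunc.X) -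
        algebraMap ℂ (RatFunc ℂ) (1 + (a : ℂ)) / (1 + RatFunc.X)) * v -
      algebraMap ℂ (RatFunc ℂ) lam / (1 - RatFunc.X ^ 2)) :
    P.eval 1 ≠ 0 ∧ P.eval (-1) ≠ 0 ∧
      ∀ β : ℂ, P.eval β = 0 → P.rootMultiplicity β = 1 := by
  have hP0 : P ≠ 0 := fun h => by simp [h] at hP
  -- Step A: polynomial form of the Riccati equation
  have key : (1 - X^2) * derivative (derivative P) =
      (C (1+(b:ℂ)) * (1+X) - C (1+(a:ℂ)) * (1-X)) * derivative P - C lam * P := by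
    set A := algebraMap (Polynomial ℂ) (RatFunc ℂ) with hA
    have hinj : Function.Injective A := RatFunc.algebraMap_injective ℂ
    have hAP : A P ≠ 0 := fun h => hP0 (hinj (by simpa using h))
    have h1 : (1 : RatFunc ℂ) - RatFunc.X ≠ 0 := by
      have h0 : (1 - X : Polynomial ℂ) ≠ 0 := fun h => by
        have := congrArg (fun p => Polynomial.coeff p 1) h
        simp [coeff_one] at this
      have : A (1 - X) ≠ 0 := fun h => h0 (hinj (by simpa using h))
      simpa [hA, map_sub, RatFunc.algebraMap_X] using this
    have h2 : (1 : RatFunc ℂ) + RatFunc.X ≠ 0 := by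
      have h0 : (1 + X : Polynomial ℂ) ≠ 0 := fun h => by
        have := congrArg (fun p => Polynomial.coeff p 1) h
        simp [coeff_one] at this
      have : A (1 + X) ≠ 0 := fun h => h0 (hinj (by simpa using h))
      simpa [hA, map_add, RatFunc.algebraMap_X] using this
    have h3 : (1 : RatFunc ℂ) - RatFunc.X ^ 2 ≠ 0 := by
      have : (1 : RatFunc ℂ) - RatFunc.X ^ 2 = (1 - RatFunc.X) * (1 + RatFunc.X) := by ring
      rw [this]; exact mul_ne_zero h1 h2
    have hac : ∀ c : ℂ, algebraMap ℂ (RatFunc ℂ) c = A (C c) := fun c =>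
      (RatFunc.algebraMap_C c).symm
    rw [hv] at hric
    rw [hac, hac, hac] at hric
    field_simp at hric
    have key3 : ((1 - RatFunc.X^2) * A (derivative (derivative P))) * (A P ^ 2 * (1 - RatFunc.X^2)) =
        (((1 + A (C (b:ℂ))) * (1+RatFunc.X) - (1 + A (C (a:ℂ))) * (1-RatFunc.X)) * A (derivative P)
          - A (C lam) * A P) * (A P ^ 2 * (1 - RatFunc.X^2)) := by
      simp only [C_add, C_1, map_add, map_one] at hric
      linear_combination (A P) * hric
    have key4 := mul_right_cancel₀ (mul_ne_zero (pow_ne_zero 2 hAP) h3) key3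
    apply hinj
    simp only [hA] at key4 ⊢
    simp only [map_mul, map_sub, map_add, map_one, map_pow, RatFunc.algebraMap_X, C_add, C_1]
    linear_combination key4
  clear hric hv
  -- facts
  have hbne : (1 : ℂ) + (b:ℂ) ≠ 0 := by
    intro h
    have : (b : ℂ) = -1 := by linear_combination h
    have : b = -1 := by exact_mod_cast this
    linarith
  have hane : (1 : ℂ) + (a:ℂ) ≠ 0 := by
    intro h
    have : (a : ℂ) = -1 := by linear_combination h
    have : a = -1 := by exact_mod_cast this
    linarith
  -- Part 1 : no root at 1
  have part1 : P.eval 1 ≠ 0 := by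
    intro h1
    -- evaluating key at 1 : derivative P vanishes at 1
    have e1 := congrArg (eval 1) key
    simp [h1] at e1
    have hd0 : eval 1 (derivative P) = 0 := by
      rcases e1 with e1 | e1
      · exact absurd (by linear_combination e1) hbne
      · exact e1
    obtain ⟨Q, hQ, hnd⟩ := P.exists_eq_pow_rootMultiplicity_mul_and_not_dvd hP0 1
    have hQ1 : Q.eval 1 ≠ 0 := fun h => hnd (dvd_iff_isRoot.2 h)
    have hm1 : 0 < P.rootMultiplicity 1 := (rootMultiplicity_pos hP0).2 h1
    generalize hgm : P.rootMultiplicity 1 = m at hQ hm1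
    rcases m with _ | m
    · omega
    rcases m with _ | k
    · -- multiplicity 1 : derivative nonzero at 1
      have : eval 1 (derivative P) = Q.eval 1 := by
        rw [hQ]
        simp [derivative_mul, derivative_pow]
      rw [hd0] at this
      exact hQ1 this.symm
    · -- multiplicity k+2
      obtain ⟨S, R, hS, hR, hd1, hd2⟩ := keyfact 1 k Q P hQ
      rw [hd2, hd1, hQ] at key
      simp only [map_one] at key
      have hX1 : (X - 1 : Polynomial ℂ) ≠ 0 := by
        simpa using X_sub_C_ne_zero (1:ℂ)
      have key2 : (X - 1 : Polynomial ℂ)^(k+1) * (-(1+X) * R) =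
          (X - 1 : Polynomial ℂ)^(k+1) * ((C (1+(b:ℂ)) * (1+X) - C (1+(a:ℂ)) * (1-X)) * S
            - C lam * ((X - 1) * Q)) := by
        linear_combination key
      have key3 := mul_left_cancel₀ (pow_ne_zero (k+1) hX1) key2
      have e3 := congrArg (eval 1) key3
      simp [hS, hR] at e3
      have hk2 : ((k:ℂ) + 2) ≠ 0 := by
        intro h
        have h2 : ((k + 2 : ℕ) : ℂ) = 0 := by push_cast; linear_combination h
        exact (by omega : (k+2) ≠ 0) (Nat.cast_eq_zero.1 h2)
      have hbc : (b:ℂ) + ((k:ℂ) + 2) = 0 := by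
        have h0 : ((b:ℂ) + ((k:ℂ) + 2)) * (((k:ℂ)+2) * Q.eval 1) * 2 = 0 := by
          linear_combination -e3
        rcases mul_eq_zero.1 h0 with h | h
        · rcases mul_eq_zero.1 h with h | h
          · exact h
          · exact absurd h (mul_ne_zero hk2 hQ1)
        · norm_num at h
      have hbr : b + ((k:ℝ) + 2) = 0 := by exact_mod_cast hbc
      have : (0:ℝ) ≤ (k:ℝ) := Nat.cast_nonneg k
      linarith
  -- Part 2 : no root at -1
  have part2 : P.eval (-1) ≠ 0 := by
    intro h1
    have e1 := congrArg (eval (-1)) key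
    simp [h1] at e1
    have hd0 : eval (-1) (derivative P) = 0 := by
      rcases e1 with e1 | e1
      · exact absurd (by linear_combination e1) hane
      · exact e1
    obtain ⟨Q, hQ, hnd⟩ := P.exists_eq_pow_rootMultiplicity_mul_and_not_dvd hP0 (-1)
    have hQ1 : Q.eval (-1) ≠ 0 := fun h => hnd (dvd_iff_isRoot.2 h)
    have hm1 : 0 < P.rootMultiplicity (-1) := (rootMultiplicity_pos hP0).2 h1
    generalize hgm : P.rootMultiplicity (-1) = m at hQ hm1
    rcases m with _ | m
    · omega
    rcases m with _ | k
    · have : eval (-1) (derivative P) = Q.eval (-1) := by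
        rw [hQ]
        simp [derivative_mul, derivative_pow]
      rw [hd0] at this
      exact hQ1 this.symm
    · obtain ⟨S, R, hS, hR, hd1, hd2⟩ := keyfact (-1) k Q P hQ
      rw [hd2, hd1, hQ] at key
      simp only [map_neg, map_one] at key
      have hX1 : (X + 1 : Polynomial ℂ) ≠ 0 := by
        simpa [sub_neg_eq_add] using X_sub_C_ne_zero (-1:ℂ)
      have key2 : (X + 1 : Polynomial ℂ)^(k+1) * (-(1-X) * R) =
          (X + 1 : Polynomial ℂ)^(k+1) * (-((C (1+(b:ℂ)) * (1+X) - C (1+(a:ℂ)) * (1-X)) * S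
            - C lam * ((X + 1) * Q))) := by
        linear_combination -key
      have key3 := mul_left_cancel₀ (pow_ne_zero (k+1) hX1) key2
      have e3 := congrArg (eval (-1)) key3
      simp [hS, hR] at e3
      have hk2 : ((k:ℂ) + 2) ≠ 0 := by
        intro h
        have h2 : ((k + 2 : ℕ) : ℂ) = 0 := by push_cast; linear_combination h
        exact (by omega : (k+2) ≠ 0) (Nat.cast_eq_zero.1 h2)
      have hac : (a:ℂ) + ((k:ℂ) + 2) = 0 := by
        have h0 : ((a:ℂ) + ((k:ℂ) + 2)) * (((k:ℂ)+2) * Q.eval (-1)) * 2 = 0 := by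
          linear_combination -e3
        rcases mul_eq_zero.1 h0 with h | h
        · rcases mul_eq_zero.1 h with h | h
          · exact h
          · exact absurd h (mul_ne_zero hk2 hQ1)
        · norm_num at h
      have har : a + ((k:ℝ) + 2) = 0 := by exact_mod_cast hac
      have : (0:ℝ) ≤ (k:ℝ) := Nat.cast_nonneg k
      linarith
  refine ⟨part1, part2, ?_⟩
  -- Part 3 : simple roots
  intro β hβ
  have hβ1 : β ≠ 1 := fun h => part1 (h ▸ hβ)
  have hβ2 : β ≠ -1 := fun h => part2 (h ▸ hβ)
  have hβsq : (1:ℂ) - β^2 ≠ 0 := by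
    intro h
    have : (β - 1) * (β + 1) = 0 := by linear_combination -h
    rcases mul_eq_zero.1 this with h' | h'
    · exact hβ1 (by linear_combination h')
    · exact hβ2 (by linear_combination h')
  obtain ⟨Q, hQ, hnd⟩ := P.exists_eq_pow_rootMultiplicity_mul_and_not_dvd hP0 β
  have hQ1 : Q.eval β ≠ 0 := fun h => hnd (dvd_iff_isRoot.2 h)
  have hm1 : 0 < P.rootMultiplicity β := (rootMultiplicity_pos hP0).2 hβ
  generalize hgm : P.rootMultiplicity β = m at hQ hm1 ⊢
  rcases m with _ | m
  · omega
  rcases m with _ | k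
  · rfl
  · exfalso
    obtain ⟨S, R, hS, hR, hd1, hd2⟩ := keyfact β k Q P hQ
    rw [hd2, hd1, hQ] at key
    have key2 : (X - C β)^k * ((1 - X^2) * R) =
        (X - C β)^k * ((X - C β) * ((C (1+(b:ℂ)) * (1+X) - C (1+(a:ℂ)) * (1-X)) * S
          - C lam * ((X - C β) * Q))) := by
      linear_combination key
    have key3 := mul_left_cancel₀ (pow_ne_zero k (X_sub_C_ne_zero β)) key2
    have e3 := congrArg (eval β) key3
    simp [hS, hR] at e3
    have hk1 : ((k:ℂ) + 1) ≠ 0 := by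
      intro h
      have h2 : ((k + 1 : ℕ) : ℂ) = 0 := by push_cast; linear_combination h
      exact (by omega : (k+1) ≠ 0) (Nat.cast_eq_zero.1 h2)
    have hk2 : ((k:ℂ) + 2) ≠ 0 := by
      intro h
      have h2 : ((k + 2 : ℕ) : ℂ) = 0 := by push_cast; linear_combination h
      exact (by omega : (k+2) ≠ 0) (Nat.cast_eq_zero.1 h2)
    rcases e3 with h | h | h | h
    · exact hβsq h
    · exact hk1 h
    · exact hk2 h
    · exact hQ1 h
end
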